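/- Let F be ℝ or ℂ, n ≥ 2, and let A be an n×n matrix over F that is not a scalar multiple of the identity. Then for every scalar c ∈ F there exist vectors x, y ∈ Fⁿ with ⟨x, y⟩ = 1 and ⟨Ax, y⟩ = c; i.e., {⟨Ax, y⟩ : ⟨x,y⟩ = 1} = F. -/

import Mathlib

open scoped Matrix

/-- A linear functional as a dot product. -/
lemma dot_of_lin {F : Type*} [Field F] {n : ℕ} (g : (Fin n → F) →ₗ[F] F) (v : Fin n → F) :
    (fun i => g (Pi.single i 1)) ⬝ᵥ v = g v := by
  rw [LinearMap.pi_apply_eq_sum_univ g v, dotProduct]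
  refine Finset.sum_congr rfl fun i _ => ?_
  rw [smul_eq_mul, mul_comm]
  congr 1
  · congr 1; ext j; simp [Pi.single_apply, eq_comm]

/-- If `A` is not a scalar multiple of the identity, then `{yᵗAx : yᵗx = 1}` is all of `F`. -/
theorem stmt_2 {F : Type*} [Field F] {n : ℕ} (hn : 2 ≤ n)
    (A : Matrix (Fin n) (Fin n) F)
    (hA : ∀ c : F, A ≠ c • (1 : Matrix (Fin n) (Fin n) F)) :
    ∀ c : F, ∃ x y : Fin n → F, y ⬝ᵥ x = 1 ∧ y ⬝ᵥ A.mulVec x = c := by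
  intro c
  -- Step 1: find x with x, Ax linearly independent
  have hx : ∃ x : Fin n → F, LinearIndependent F ![x, A.mulVec x] := by
    by_contra h
    push_neg at h
    have key : ∀ x : Fin n → F, x ≠ 0 → ∃ a : F, a • x = A.mulVec x := by
      intro x hx0
      by_contra h2
      push_neg at h2
      exact h x ((LinearIndependent.pair_iff' hx0).2 h2)
    set e : Fin n → (Fin n → F) := fun i => Pi.single i (1 : F) with he
    have hne : ∀ i, e i ≠ 0 := fun i => by
      simp [he, funext_iff]
      exact ⟨i, by simp⟩
    choose μ hμ using fun i => key (e i) (hne i)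
    have hsame : ∀ i j : Fin n, i ≠ j → μ i = μ j := by
      intro i j hij
      have hsum : e i + e j ≠ 0 := by
        intro hcontra
        have := congrFun hcontra i
        simp [he, Pi.single_apply, hij] at this
      obtain ⟨ν, hν⟩ := key (e i + e j) hsum
      rw [Matrix.mulVec_add, ← hμ i, ← hμ j] at hν
      have hi := congrFun hν i
      have hj := congrFun hν j
      simp [he, Pi.single_apply, hij, hij.symm] at hi hj
      exact hi.symm.trans hj
    have i0 : Fin n := ⟨0, by omega⟩
    have hμconst : ∀ i : Fin n, μ i = μ i0 := by
      intro i
      rcases eq_or_ne i i0 with rfl | hi0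
      · rfl
      · exact hsame i i0 hi0
    apply hA (μ i0)
    ext k l
    have := congrFun (hμ l).symm k
    simp only [Matrix.mulVec_single, he] at this
    rw [MulOpposite.op_one, one_smul, Matrix.col_apply] at this
    rw [this, Matrix.smul_apply, Matrix.one_apply]
    rcases eq_or_ne k l with rfl | hkl
    · simp [he, hμconst k]
    · simp [he, Pi.single_apply, Ne.symm hkl, hkl]
  obtain ⟨x, hli⟩ := hx
  -- Step 2: build a functional g with g x = 1, g (Ax) = c
  set W := Submodule.span F (Set.range ![x, A.mulVec x]) with hW
  let b : Module.Basis (Fin 2) F W := Module.Basis.span hli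
  let g₀ : W →ₗ[F] F := b.constr F ![(1 : F), c]
  obtain ⟨g, hg⟩ := LinearMap.exists_extend g₀
  have hmem : ∀ i : Fin 2, (![x, A.mulVec x] i) ∈ W :=
    fun i => Submodule.subset_span (Set.mem_range_self i)
  have hgv : ∀ i : Fin 2, g (![x, A.mulVec x] i) = ![(1 : F), c] i := by
    intro i
    have hb : (b i : Fin n → F) = ![x, A.mulVec x] i := congrArg Subtype.val (Module.Basis.span_apply hli i)
    have : g (W.subtype (b i)) = g₀ (b i) := by rw [← hg]; rfl
    rw [Submodule.subtype_apply, hb] at this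
    rw [this, Module.Basis.constr_basis]
  refine ⟨x, fun i => g (Pi.single i 1), ?_, ?_⟩
  · rw [dot_of_lin]
    simpa using hgv 0
  · rw [dot_of_lin]
    simpa using hgv 1
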